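/- For a finite-dimensional Hermitian matrix H with partition function Z(β) = Tr(e^{-βH}), the function β ↦ Z((β+β')/2)/sqrt(Z(β)Z(β')) evaluated with β' = β + δ satisfies: the negative of 2 times the second-order coefficient of ln F in δ equals Var_ρ(H)/4, where Var_ρ(H) is the variance of H in the Gibbs state at inverse temperature β. Equivalently, the thermal fidelity susceptibility ξ(β) := -2 lim_{δ→0} ln F(β-δ/2, β+δ/2)/δ² equals C_v(β)/(4β²) with C_v(β) = β² Var_ρ(H). -/

import Mathlib

open Matrix Filter

private lemma exp_smul_eig {d : ℕ} (H : Matrix (Fin d) (Fin d) ℝ) (hH : H.IsHermitian) (b : ℝ) :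
    NormedSpace.exp ((-b) • H) =
      (hH.eigenvectorUnitary : Matrix (Fin d) (Fin d) ℝ) *
        diagonal (fun i => Real.exp ((-b) * hH.eigenvalues i)) *
        star (hH.eigenvectorUnitary : Matrix (Fin d) (Fin d) ℝ) := by
  set U := Unitary.toUnits hH.eigenvectorUnitary with hU
  have hUc : (U : Matrix (Fin d) (Fin d) ℝ) = (hH.eigenvectorUnitary : Matrix (Fin d) (Fin d) ℝ) := rfl
  have hUinv : ((U⁻¹ : _ˣ) : Matrix (Fin d) (Fin d) ℝ) = star (hH.eigenvectorUnitary : Matrix (Fin d) (Fin d) ℝ) := rfl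
  have h1 : (-b) • H = (U : Matrix (Fin d) (Fin d) ℝ) * diagonal (fun i => (-b) * hH.eigenvalues i) * ((U⁻¹ : _ˣ) : Matrix (Fin d) (Fin d) ℝ) := by
    rw [hUc, hUinv]
    conv_lhs => rw [hH.spectral_theorem]
    rw [Unitary.conjStarAlgAut_apply]
    rw [← smul_mul_assoc, ← mul_smul_comm]
    congr 2
    ext i j
    simp [diagonal, Function.comp]
  rw [h1, Matrix.exp_units_conj, Matrix.exp_diagonal, hUc, hUinv]
  congr 2
  rw [Pi.exp_def]
  ext i
  simp [← Real.exp_eq_exp_ℝ]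

private lemma conj_mul_conj {d : ℕ} (Us : Matrix (Fin d) (Fin d) ℝ) (h : star Us * Us = 1)
    (A B : Matrix (Fin d) (Fin d) ℝ) :
    (Us * A * star Us) * (Us * B * star Us) = Us * (A * B) * star Us := by
  simp only [Matrix.mul_assoc]
  rw [← Matrix.mul_assoc (star Us) Us (B * star Us), h, Matrix.one_mul]

private lemma trace_conj {d : ℕ} (Us : Matrix (Fin d) (Fin d) ℝ) (h : star Us * Us = 1)
    (A : Matrix (Fin d) (Fin d) ℝ) :
    (Us * A * star Us).trace = A.trace := by
  rw [Matrix.trace_mul_cycle, h, Matrix.one_mul]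

private lemma log_partition_second_diff {ι : Type*} [Fintype ι] [Nonempty ι] (μ : ι → ℝ) (β : ℝ) :
    Tendsto (fun δ : ℝ =>
      (Real.log (∑ i, Real.exp ((-(β + δ/2)) * μ i)) + Real.log (∑ i, Real.exp ((-(β - δ/2)) * μ i))
        - 2 * Real.log (∑ i, Real.exp ((-β) * μ i))) / δ^2)
      (nhdsWithin 0 {(0:ℝ)}ᶜ)
      (nhds (((∑ i, Real.exp ((-β) * μ i) * (-(μ i)) * (-(μ i))) * (∑ i, Real.exp ((-β) * μ i))
            - (∑ i, Real.exp ((-β) * μ i) * (-(μ i))) * (∑ i, Real.exp ((-β) * μ i) * (-(μ i))))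
            / (∑ i, Real.exp ((-β) * μ i))^2 / 4)) := by
  set S : ℝ → ℝ := fun b => ∑ i, Real.exp ((-b) * μ i) with hS
  set S1 : ℝ → ℝ := fun b => ∑ i, Real.exp ((-b) * μ i) * (-(μ i)) with hS1
  set S2 : ℝ → ℝ := fun b => ∑ i, Real.exp ((-b) * μ i) * (-(μ i)) * (-(μ i)) with hS2
  have hSpos : ∀ b, 0 < S b := fun b =>
    Finset.sum_pos (fun i _ => Real.exp_pos _) Finset.univ_nonempty
  have hinner : ∀ (c : ℝ) (b : ℝ), HasDerivAt (fun b : ℝ => (-b) * c) (-c) b := by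
    intro c b
    simpa using ((hasDerivAt_id b).neg.mul_const c)
  have hSd : ∀ b, HasDerivAt S (S1 b) b := by
    intro b
    apply HasDerivAt.fun_sum
    intro i _
    simpa using ((hinner (μ i) b).exp)
  have hS1d : ∀ b, HasDerivAt S1 (S2 b) b := by
    intro b
    apply HasDerivAt.fun_sum
    intro i _
    simpa using ((hinner (μ i) b).exp.mul_const (-(μ i)))
  set G : ℝ → ℝ := fun b => S1 b / S b with hG
  set V : ℝ := (S2 β * S β - S1 β * S1 β) / (S β)^2 with hV
  have hGd : HasDerivAt G V β := by
    simpa [hV, sq] using (hS1d β).fun_div (hSd β) (hSpos β).ne'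
  set g : ℝ → ℝ := fun b => Real.log (S b) with hg
  have hgd : ∀ b, HasDerivAt g (G b) b := fun b => (hSd b).log (hSpos b).ne'
  set f : ℝ → ℝ := fun δ => g (β + δ/2) + g (β - δ/2) - 2 * g β with hf
  have hin1 : ∀ δ : ℝ, HasDerivAt (fun δ : ℝ => β + δ/2) (1/2) δ := by
    intro δ
    simpa using ((hasDerivAt_id δ).div_const 2).const_add β
  have hin2 : ∀ δ : ℝ, HasDerivAt (fun δ : ℝ => β - δ/2) (-(1/2)) δ := by
    intro δ
    exact (((hasDerivAt_id δ).div_const 2).const_sub β)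
  have hfd : ∀ δ, HasDerivAt f (G (β + δ/2) * (1/2) + G (β - δ/2) * (-(1/2))) δ := by
    intro δ
    have h1 : HasDerivAt (fun δ : ℝ => g (β + δ/2)) (G (β + δ/2) * (1/2)) δ :=
      (hgd _).comp δ (hin1 δ)
    have h2 : HasDerivAt (fun δ : ℝ => g (β - δ/2)) (G (β - δ/2) * (-(1/2))) δ :=
      (hgd _).comp δ (hin2 δ)
    exact ((h1.add h2).sub_const (2 * g β))
  have hdend : ∀ δ : ℝ, HasDerivAt (fun δ : ℝ => δ^2) (2 * δ) δ := by
    intro δ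
    simpa using hasDerivAt_pow 2 δ
  have hslope := hasDerivAt_iff_tendsto_slope.mp hGd
  have hmap1 : Tendsto (fun δ : ℝ => β + δ/2) (nhdsWithin 0 {(0:ℝ)}ᶜ) (nhdsWithin β {β}ᶜ) := by
    rw [tendsto_nhdsWithin_iff]
    constructor
    · have : Tendsto (fun δ : ℝ => β + δ/2) (nhds 0) (nhds (β + 0/2)) := by
        exact (continuous_const.add (continuous_id.div_const 2)).tendsto 0
      simpa using this.mono_left nhdsWithin_le_nhds
    · filter_upwards [self_mem_nhdsWithin] with δ hδ
      simp only [Set.mem_compl_iff, Set.mem_singleton_iff] at hδ ⊢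
      intro h
      apply hδ
      have : δ / 2 = 0 := by linarith
      linarith
  have hmap2 : Tendsto (fun δ : ℝ => β - δ/2) (nhdsWithin 0 {(0:ℝ)}ᶜ) (nhdsWithin β {β}ᶜ) := by
    rw [tendsto_nhdsWithin_iff]
    constructor
    · have : Tendsto (fun δ : ℝ => β - δ/2) (nhds 0) (nhds (β - 0/2)) := by
        exact (continuous_const.sub (continuous_id.div_const 2)).tendsto 0
      simpa using this.mono_left nhdsWithin_le_nhds
    · filter_upwards [self_mem_nhdsWithin] with δ hδ
      simp only [Set.mem_compl_iff, Set.mem_singleton_iff] at hδ ⊢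
      intro h
      apply hδ
      have : δ / 2 = 0 := by linarith
      linarith
  have A1 : Tendsto (fun δ : ℝ => slope G β (β + δ/2)) (nhdsWithin 0 {(0:ℝ)}ᶜ) (nhds V) :=
    hslope.comp hmap1
  have A2 : Tendsto (fun δ : ℝ => slope G β (β - δ/2)) (nhdsWithin 0 {(0:ℝ)}ᶜ) (nhds V) :=
    hslope.comp hmap2
  have hdiv : Tendsto (fun δ : ℝ => (G (β + δ/2) * (1/2) + G (β - δ/2) * (-(1/2))) / (2 * δ))
      (nhdsWithin 0 {(0:ℝ)}ᶜ) (nhds (V / 4)) := by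
    have hcomb := (A1.add A2).div_const 8
    have heq : ∀ᶠ δ in nhdsWithin 0 {(0:ℝ)}ᶜ,
        (slope G β (β + δ/2) + slope G β (β - δ/2)) / 8
          = (G (β + δ/2) * (1/2) + G (β - δ/2) * (-(1/2))) / (2 * δ) := by
      filter_upwards [self_mem_nhdsWithin] with δ hδ
      simp only [Set.mem_compl_iff, Set.mem_singleton_iff] at hδ
      rw [slope_def_field, slope_def_field]
      obtain ⟨a, ha⟩ : ∃ a, G (β + δ/2) = a := ⟨_, rfl⟩
      obtain ⟨b, hb⟩ : ∃ b, G (β - δ/2) = b := ⟨_, rfl⟩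
      obtain ⟨c, hc⟩ : ∃ c, G β = c := ⟨_, rfl⟩
      rw [ha, hb, hc]
      have h1 : β + δ/2 - β = δ/2 := by ring
      have h2 : β - δ/2 - β = -(δ/2) := by ring
      rw [h1, h2]
      have e1 : (a - c) / (δ/2) + (b - c) / (-(δ/2)) = (a - b)/(δ/2) := by
        rw [div_neg, ← sub_eq_add_neg, div_sub_div_same]
        congr 1
        ring
      rw [e1, show a*(1/2)+b*(-(1/2)) = (a-b)/2 from by ring, div_div, div_div]
      congr 1
      ring
    have : (V + V) / 8 = V / 4 := by ring
    rw [← this]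
    exact hcomb.congr' heq
  have hf0 : Tendsto f (nhdsWithin 0 {(0:ℝ)}ᶜ) (nhds 0) := by
    have hc : ContinuousAt f 0 := (hfd 0).continuousAt
    have : f 0 = 0 := by
      simp only [hf]; norm_num; ring
    have := hc.tendsto
    rw [‹f 0 = 0›] at this
    exact this.mono_left nhdsWithin_le_nhds
  have hden0 : Tendsto (fun δ : ℝ => δ^2) (nhdsWithin 0 {(0:ℝ)}ᶜ) (nhds 0) := by
    have : Tendsto (fun δ : ℝ => δ^2) (nhds 0) (nhds ((0:ℝ)^2)) := (continuous_pow 2).tendsto 0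
    simpa using this.mono_left nhdsWithin_le_nhds
  have hlh : Tendsto (fun δ : ℝ => f δ / δ^2) (nhdsWithin 0 {(0:ℝ)}ᶜ) (nhds (V / 4)) := by
    apply HasDerivAt.lhopital_zero_nhdsNE (f' := fun δ => G (β + δ/2) * (1/2) + G (β - δ/2) * (-(1/2)))
      (g' := fun δ => 2 * δ)
    · filter_upwards with δ; exact hfd δ
    · filter_upwards with δ; exact hdend δ
    · filter_upwards [self_mem_nhdsWithin] with δ hδ
      simp only [Set.mem_compl_iff, Set.mem_singleton_iff] at hδ
      intro h
      apply hδ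
      linarith [mul_eq_zero.mp h]
    · exact hf0
    · exact hden0
    · exact hdiv
  rw [show (((∑ i, Real.exp ((-β) * μ i) * (-(μ i)) * (-(μ i))) * (∑ i, Real.exp ((-β) * μ i))
            - (∑ i, Real.exp ((-β) * μ i) * (-(μ i))) * (∑ i, Real.exp ((-β) * μ i) * (-(μ i))))
            / (∑ i, Real.exp ((-β) * μ i))^2 / 4) = V / 4 from rfl]
  exact hlh.congr (fun δ => by rw [hf])

/-- The thermal fidelity susceptibility
`ξ(β) = -2 lim_{δ→0} ln F(β-δ/2, β+δ/2)/δ²`, where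
`F(β₁,β₂) = Z((β₁+β₂)/2)/√(Z(β₁)Z(β₂))` is the Uhlmann fidelity between commuting Gibbs
states of the Hermitian matrix `H`, equals `C_v(β)/(4β²)` with `C_v(β) = β² Var_ρ(H)`,
where `Var_ρ(H)` is the variance of `H` in the Gibbs state at inverse temperature `β`. -/
theorem thermal_fidelity_susceptibility_eq_specific_heat {d : ℕ}
    (H : Matrix (Fin d) (Fin d) ℝ) (hH : H.IsHermitian)
    (β : ℝ) (hβ : 0 < β)
    (Z : ℝ → ℝ) (hZ : ∀ b, Z b = (NormedSpace.exp ((-b) • H)).trace)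
    (F : ℝ → ℝ → ℝ)
    (hF : ∀ β₁ β₂, F β₁ β₂ = Z ((β₁ + β₂) / 2) / Real.sqrt (Z β₁ * Z β₂))
    (ρ : Matrix (Fin d) (Fin d) ℝ)
    (hρdef : ρ = (Z β)⁻¹ • NormedSpace.exp ((-β) • H))
    (Var Cv : ℝ)
    (hVar : Var = (ρ * H * H).trace - ((ρ * H).trace) ^ 2)
    (hCv : Cv = β ^ 2 * Var) :
    Tendsto (fun δ : ℝ => -2 * Real.log (F (β - δ / 2) (β + δ / 2)) / δ ^ 2)
      (nhdsWithin 0 {(0 : ℝ)}ᶜ) (nhds (Cv / (4 * β ^ 2))) := by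
  rcases Nat.eq_zero_or_pos d with hd | hd
  · -- degenerate case `d = 0`
    subst hd
    have hZ0 : ∀ b, Z b = 0 := by
      intro b
      rw [hZ]
      simp [Matrix.trace]
    have htr0 : ∀ A : Matrix (Fin 0) (Fin 0) ℝ, A.trace = 0 := by
      intro A
      simp [Matrix.trace]
    have hVar0 : Var = 0 := by rw [hVar, htr0, htr0]; norm_num
    have hCv0 : Cv = 0 := by rw [hCv, hVar0, mul_zero]
    have hfun : ∀ δ : ℝ, -2 * Real.log (F (β - δ / 2) (β + δ / 2)) / δ ^ 2 = 0 := by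
      intro δ
      rw [hF, hZ0, hZ0, hZ0]
      norm_num
    rw [hCv0, zero_div]
    exact tendsto_const_nhds.congr (fun δ => (hfun δ).symm)
  · haveI : Nonempty (Fin d) := Fin.pos_iff_nonempty.mp hd
    set μ := hH.eigenvalues with hμ
    set Us : Matrix (Fin d) (Fin d) ℝ := (hH.eigenvectorUnitary : Matrix (Fin d) (Fin d) ℝ) with hUs
    have hstar : star Us * Us = 1 := Unitary.coe_star_mul_self hH.eigenvectorUnitary
    have hHspec : H = Us * diagonal μ * star Us := by
      have hco : RCLike.ofReal ∘ hH.eigenvalues = μ := by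
        funext i; simp [Function.comp, RCLike.ofReal_real_eq_id, hμ]
      conv_lhs => rw [hH.spectral_theorem]
      rw [hco, Unitary.conjStarAlgAut_apply]
    have hZs : ∀ b, Z b = ∑ i, Real.exp ((-b) * μ i) := by
      intro b
      rw [hZ, exp_smul_eig H hH b, trace_conj Us hstar, Matrix.trace_diagonal]
    have hZpos : ∀ b, 0 < Z b := by
      intro b
      rw [hZs]
      exact Finset.sum_pos (fun i _ => Real.exp_pos _) Finset.univ_nonempty
    -- trace computations
    have hρ : ρ = (Z β)⁻¹ • (Us * diagonal (fun i => Real.exp ((-β) * μ i)) * star Us) := by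
      rw [hρdef, exp_smul_eig H hH β]
    have htr1 : (ρ * H).trace = (Z β)⁻¹ * ∑ i, Real.exp ((-β) * μ i) * μ i := by
      rw [hρ, Matrix.smul_mul, Matrix.trace_smul, smul_eq_mul]
      congr 1
      conv_lhs => rw [hHspec]
      rw [conj_mul_conj Us hstar, diagonal_mul_diagonal, trace_conj Us hstar,
        Matrix.trace_diagonal]
    have htr2 : (ρ * H * H).trace = (Z β)⁻¹ * ∑ i, Real.exp ((-β) * μ i) * μ i * μ i := by
      rw [hρ, Matrix.smul_mul, Matrix.smul_mul, Matrix.trace_smul, smul_eq_mul]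
      congr 1
      conv_lhs => rw [hHspec]
      rw [conj_mul_conj Us hstar, diagonal_mul_diagonal, conj_mul_conj Us hstar,
        diagonal_mul_diagonal, trace_conj Us hstar, Matrix.trace_diagonal]
    -- identify the limit value
    have hval : Cv / (4 * β ^ 2)
        = ((∑ i, Real.exp ((-β) * μ i) * (-(μ i)) * (-(μ i))) * (∑ i, Real.exp ((-β) * μ i))
            - (∑ i, Real.exp ((-β) * μ i) * (-(μ i))) * (∑ i, Real.exp ((-β) * μ i) * (-(μ i))))
            / (∑ i, Real.exp ((-β) * μ i))^2 / 4 := by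
      have hsum2 : (∑ i, Real.exp ((-β) * μ i) * (-(μ i)) * (-(μ i)))
          = ∑ i, Real.exp ((-β) * μ i) * μ i * μ i := by
        apply Finset.sum_congr rfl
        intro i _
        ring
      have hsum1 : ((∑ i, Real.exp ((-β) * μ i) * (-(μ i))) * (∑ i, Real.exp ((-β) * μ i) * (-(μ i))))
          = (∑ i, Real.exp ((-β) * μ i) * μ i) * (∑ i, Real.exp ((-β) * μ i) * μ i) := by
        rw [show (∑ i, Real.exp ((-β) * μ i) * (-(μ i))) = -(∑ i, Real.exp ((-β) * μ i) * μ i) from by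
          rw [← Finset.sum_neg_distrib]; apply Finset.sum_congr rfl; intro i _; ring]
        ring
      rw [hsum2, hsum1, hCv, hVar, htr1, htr2]
      have hSpos : (0:ℝ) < ∑ i, Real.exp ((-β) * μ i) := by
        rw [← hZs β]; exact hZpos β
      rw [← hZs β] at *
      field_simp
    rw [hval]
    -- identify the function
    apply (log_partition_second_diff μ β).congr
    intro δ
    congr 1
    rw [hF]
    have harg : ((β - δ/2) + (β + δ/2))/2 = β := by ring
    rw [harg]
    have h1 := hZpos (β - δ/2)
    have h2 := hZpos (β + δ/2)
    have h0 := hZpos β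
    have hprod : 0 < Z (β - δ/2) * Z (β + δ/2) := mul_pos h1 h2
    rw [Real.log_div h0.ne' (Real.sqrt_pos.mpr hprod).ne', Real.log_sqrt hprod.le,
      Real.log_mul h1.ne' h2.ne']
    rw [hZs (β + δ/2), hZs (β - δ/2), hZs β]
    ring
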